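/- Consider mismatched decoding of a binary-input channel with symmetric relative metrics q(z) and quantization parameter α. At a boundary b between the quantization regions of outputs z₁ and z₂ of a 2-PAM Gaussian channel with gain g, the optimality condition (ratio of likelihoods) gives e^{2bg} = -ln((1+e^{αq(z₁)})/(1+e^{αq(z₂)})) / ln((1+e^{-αq(z₁)})/(1+e^{-αq(z₂)})). If q(z₁) < q(z₂) and α > 0, the right-hand side is positive and greater than 1, hence b > 0 is well-defined. -/

import Mathlib

open Real

theorem stmt_16 (α a b : ℝ) (hα : 0 < α) (hab : a < b) :
    -- R is the right-hand side of the boundary optimality condition, with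
    -- a = q(z₁), b = q(z₂) the relative metrics of the two quantized outputs
    let R : ℝ :=
      -(Real.log ((1 + Real.exp (α * a)) / (1 + Real.exp (α * b)))) /
        Real.log ((1 + Real.exp (-(α * a))) / (1 + Real.exp (-(α * b))))
    Real.log ((1 + Real.exp (α * a)) / (1 + Real.exp (α * b))) < 0 ∧
      0 < Real.log ((1 + Real.exp (-(α * a))) / (1 + Real.exp (-(α * b)))) ∧
      0 < R ∧
      (0 < a + b →
        1 < R ∧
          -- hence the boundary b > 0 is well-defined via e^{2 b g} = R
          ∀ g : ℝ, 0 < g → ∃ bd : ℝ, 0 < bd ∧ Real.exp (2 * bd * g) = R) := by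
  intro R
  have hpa : (0:ℝ) < 1 + Real.exp (α * a) := by positivity
  have hpb : (0:ℝ) < 1 + Real.exp (α * b) := by positivity
  have hna : (0:ℝ) < 1 + Real.exp (-(α * a)) := by positivity
  have hnb : (0:ℝ) < 1 + Real.exp (-(α * b)) := by positivity
  have hlt : α * a < α * b := by nlinarith
  have h1 : Real.log ((1 + Real.exp (α * a)) / (1 + Real.exp (α * b))) < 0 := by
    apply Real.log_neg (by positivity)
    rw [div_lt_one hpb]
    have := Real.exp_lt_exp.mpr hlt
    linarith
  have h2 : 0 < Real.log ((1 + Real.exp (-(α * a))) / (1 + Real.exp (-(α * b)))) := by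
    apply Real.log_pos
    rw [one_lt_div hnb]
    have := Real.exp_lt_exp.mpr (neg_lt_neg hlt)
    linarith
  have hR : 0 < R := by
    apply div_pos (by linarith) h2
  refine ⟨h1, h2, hR, fun hsum => ?_⟩
  have hR1 : 1 < R := by
    rw [show R = _ / _ from rfl, lt_div_iff₀ h2, one_mul]
    -- need log2 < -log1, i.e. log1 + log2 < 0
    rw [Real.log_div (ne_of_gt hpa) (ne_of_gt hpb), Real.log_div (ne_of_gt hna) (ne_of_gt hnb)]
    have key : (1 + Real.exp (α * a)) * (1 + Real.exp (-(α * a))) <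
        (1 + Real.exp (α * b)) * (1 + Real.exp (-(α * b))) := by
      have ea : (1 + Real.exp (α * a)) * (1 + Real.exp (-(α * a)))
          = 2 + 2 * Real.cosh (α * a) := by
        rw [Real.cosh_eq]
        have := Real.exp_neg (α * a)
        have h0 : Real.exp (α * a) ≠ 0 := Real.exp_ne_zero _
        field_simp [this]
        rw [this]
        linear_combination mul_inv_cancel₀ h0
      have eb : (1 + Real.exp (α * b)) * (1 + Real.exp (-(α * b)))
          = 2 + 2 * Real.cosh (α * b) := by
        rw [Real.cosh_eq]
        have := Real.exp_neg (α * b)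
        have h0 : Real.exp (α * b) ≠ 0 := Real.exp_ne_zero _
        field_simp [this]
        rw [this]
        linear_combination mul_inv_cancel₀ h0
      rw [ea, eb]
      have : Real.cosh (α * a) < Real.cosh (α * b) := by
        rw [Real.cosh_lt_cosh]
        rw [abs_lt]
        have hb0 : 0 < α * b := by nlinarith
        constructor
        · rw [abs_of_pos hb0]; nlinarith
        · rw [abs_of_pos hb0]; nlinarith
      linarith
    have hlog := Real.log_lt_log (by positivity) key
    rw [Real.log_mul (ne_of_gt hpa) (ne_of_gt hna),
        Real.log_mul (ne_of_gt hpb) (ne_of_gt hnb)] at hlog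
    linarith
  refine ⟨hR1, fun g hg => ⟨Real.log R / (2 * g), ?_, ?_⟩⟩
  · have : 0 < Real.log R := Real.log_pos hR1
    positivity
  · rw [show 2 * (Real.log R / (2 * g)) * g = Real.log R by field_simp]
    exact Real.exp_log hR
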